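/- The free abelian group monad F on Set is not weakly affine: F1 ≅ ℤ with the multiplication induced by the lax monoidal structure is the multiplicative monoid of integers, which is not a group. -/

import Mathlib

/-- The lax monoidal structure of the free abelian group monad,
`c_{X,Y} : FX × FY → F(X × Y)`, the bilinear extension of `(x, y) ↦ (x, y)`. -/
def fabLax {X Y : Type} (a : FreeAbelianGroup X) (b : FreeAbelianGroup Y) :
    FreeAbelianGroup (X × Y) :=
  FreeAbelianGroup.lift
    (fun x => FreeAbelianGroup.lift (fun y => FreeAbelianGroup.of (x, y)) b) a

/-- The induced monoid multiplication on `F1`: `c_{1,1}` followed by the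
functorial action of the isomorphism `1 × 1 ≅ 1`. -/
def fabMulOne (a b : FreeAbelianGroup PUnit) : FreeAbelianGroup PUnit :=
  FreeAbelianGroup.map (fun _ : PUnit × PUnit => PUnit.unit) (fabLax a b)

/-- The canonical isomorphism `F1 ≅ ℤ`. -/
def fabToInt : FreeAbelianGroup PUnit →+ ℤ :=
  FreeAbelianGroup.lift (fun _ => (1 : ℤ))

lemma fab_map_lift (z : FreeAbelianGroup (PUnit × PUnit)) :
    fabToInt (FreeAbelianGroup.map (fun _ : PUnit × PUnit => PUnit.unit) z) =
      FreeAbelianGroup.lift (fun _ : PUnit × PUnit => (1 : ℤ)) z := by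
  refine FreeAbelianGroup.induction_on z ?_ ?_ ?_ ?_
  · simp
  · intro p
    rw [FreeAbelianGroup.map_of_apply, FreeAbelianGroup.lift_apply_of, fabToInt,
      FreeAbelianGroup.lift_apply_of]
  · intro p h; simp only [map_neg, h]
  · intro p q hp hq; simp only [map_add, hp, hq]

lemma fab_left (a : FreeAbelianGroup PUnit) :
    fabToInt a • FreeAbelianGroup.of PUnit.unit = a := by
  refine FreeAbelianGroup.induction_on a ?_ ?_ ?_ ?_
  · simp
  · intro x
    rw [fabToInt, FreeAbelianGroup.lift_apply_of, one_smul]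
  · intro x h
    rw [map_neg, neg_smul, h]
  · intro x y hx hy
    rw [map_add, add_smul, hx, hy]

lemma fab_bij : Function.Bijective fabToInt := by
  constructor
  · intro a b h
    rw [← fab_left a, ← fab_left b, h]
  · intro n
    refine ⟨n • FreeAbelianGroup.of PUnit.unit, ?_⟩
    rw [map_zsmul, fabToInt, FreeAbelianGroup.lift_apply_of, smul_eq_mul, mul_one]

lemma fabMul_hom (a b : FreeAbelianGroup PUnit) :
    fabToInt (fabMulOne a b) = fabToInt a * fabToInt b := by
  refine FreeAbelianGroup.induction_on a ?_ ?_ ?_ ?_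
  · simp [fabMulOne, fabLax]
  · intro x
    unfold fabMulOne fabLax
    rw [FreeAbelianGroup.lift_apply_of, fab_map_lift]
    have hx : fabToInt (FreeAbelianGroup.of x) = 1 := FreeAbelianGroup.lift_apply_of _ _
    rw [hx, one_mul]
    refine FreeAbelianGroup.induction_on b ?_ ?_ ?_ ?_
    · simp
    · intro y
      rw [FreeAbelianGroup.lift_apply_of, FreeAbelianGroup.lift_apply_of]
      exact (FreeAbelianGroup.lift_apply_of _ _).symm
    · intro y h; simp only [map_neg, h]
    · intro y z hy hz; simp only [map_add, hy, hz]
  · intro x h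
    simp only [fabMulOne, fabLax, map_neg, FreeAbelianGroup.lift_apply_of] at h ⊢
    simp [h]
  · intro x y hx hy
    simp only [fabMulOne, fabLax, map_add] at hx hy ⊢
    simp [hx, hy]
    ring

/-- The free abelian group monad `F` on `Set` is not weakly affine: under the
isomorphism `F1 ≅ ℤ`, the multiplication induced by the lax monoidal
structure is the multiplicative monoid of integers (with unit `δ_* = of *`),
which is not a group. -/
theorem stmt15 :
    Function.Bijective fabToInt ∧
    (∀ a b : FreeAbelianGroup PUnit,
      fabToInt (fabMulOne a b) = fabToInt a * fabToInt b) ∧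
    ¬ (∀ a : FreeAbelianGroup PUnit, ∃ b : FreeAbelianGroup PUnit,
        fabMulOne a b = FreeAbelianGroup.of PUnit.unit) := by
  refine ⟨fab_bij, fabMul_hom, ?_⟩
  intro h
  obtain ⟨b, hb⟩ := h 0
  have := congrArg fabToInt hb
  rw [fabMul_hom] at this
  simp [fabToInt] at this
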